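/- Let n ≥ 1 and a > 0, and let φ_a be the solution of F(φ_a(t)) e^{φ_a(t)} = e^{nt}/n + F(a) e^a with φ_a > a. Then for each fixed t ∈ ℝ, φ_a(t + log a)/a → (1 + e^{nt})^{1/n} as a → 0⁺. -/

import Mathlib

open Real Finset Filter Set

/-- Bubble limit: for each fixed `t`, `φ_a(t + log a)/a → (1 + e^{nt})^{1/n}` as `a → 0⁺`. -/
theorem stmt_14 (n : ℕ) (hn : 1 ≤ n)
    (F : ℝ → ℝ)
    (hF : ∀ x : ℝ, F x = ∑ r ∈ Finset.range n,
      (-1 : ℝ) ^ (n - r - 1) * ((Nat.factorial (n - 1) : ℝ) / (Nat.factorial r : ℝ)) * x ^ r)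
    (φ : ℝ → ℝ → ℝ)
    (hφa : ∀ a : ℝ, 0 < a → ∀ t, a < φ a t)
    (hφeq : ∀ a : ℝ, 0 < a → ∀ t,
      F (φ a t) * Real.exp (φ a t) = Real.exp (n * t) / n + F a * Real.exp a)
    (t : ℝ) :
    Filter.Tendsto (fun a => φ a (t + Real.log a) / a)
      (nhdsWithin 0 (Set.Ioi 0))
      (nhds ((1 + Real.exp (n * t)) ^ ((1 : ℝ) / n))) := by
  obtain ⟨m, rfl⟩ : ∃ m, n = m + 1 := ⟨n - 1, (Nat.succ_pred_eq_of_pos hn).symm⟩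
  -- derivative of F
  have hc : ∀ x : ℝ, HasDerivAt F (x ^ m - F x) x := by
    intro x
    have hFe : F = fun y => ∑ r ∈ Finset.range (m + 1),
        (-1 : ℝ) ^ (m - r) * ((Nat.factorial m : ℝ) / (Nat.factorial r : ℝ)) * y ^ r := by
      funext y
      rw [hF y]
      refine Finset.sum_congr rfl fun r _ => ?_
      have h1 : m + 1 - r - 1 = m - r := by omega
      have h2 : m + 1 - 1 = m := by omega
      rw [h1, h2]
    rw [hFe]
    have hD : HasDerivAt (fun y => ∑ r ∈ Finset.range (m + 1),
        (-1 : ℝ) ^ (m - r) * ((Nat.factorial m : ℝ) / (Nat.factorial r : ℝ)) * y ^ r)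
        (∑ r ∈ Finset.range (m + 1),
        (-1 : ℝ) ^ (m - r) * ((Nat.factorial m : ℝ) / (Nat.factorial r : ℝ))
          * ((r : ℝ) * x ^ (r - 1))) x := by
      apply HasDerivAt.fun_sum
      intro r _
      exact (hasDerivAt_pow r x).const_mul _
    convert hD using 1
    show x ^ m - (∑ r ∈ Finset.range (m + 1),
        (-1 : ℝ) ^ (m - r) * ((Nat.factorial m : ℝ) / (Nat.factorial r : ℝ)) * x ^ r) = _
    rw [Finset.sum_range_succ' (fun r => (-1 : ℝ) ^ (m - r) *
        ((Nat.factorial m : ℝ) / (Nat.factorial r : ℝ)) * ((r : ℝ) * x ^ (r - 1))) m]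
    rw [Finset.sum_range_succ (fun r => (-1 : ℝ) ^ (m - r) *
        ((Nat.factorial m : ℝ) / (Nat.factorial r : ℝ)) * x ^ r) m]
    have hterm : ∀ i ∈ Finset.range m,
        (-1 : ℝ) ^ (m - (i + 1)) * ((Nat.factorial m : ℝ) / (Nat.factorial (i + 1) : ℝ))
          * (((i : ℝ) + 1) * x ^ i)
        = -((-1 : ℝ) ^ (m - i) * ((Nat.factorial m : ℝ) / (Nat.factorial i : ℝ)) * x ^ i) := by
      intro i hi
      rw [Finset.mem_range] at hi
      have h1 : m - i = (m - (i + 1)) + 1 := by omega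
      rw [h1, pow_succ, Nat.factorial_succ]
      have h2 : (Nat.factorial i : ℝ) ≠ 0 := Nat.cast_ne_zero.mpr (Nat.factorial_ne_zero i)
      have h3 : ((i : ℝ) + 1) ≠ 0 := by positivity
      push_cast
      field_simp
    have hfac : ((Nat.factorial m : ℝ) / (Nat.factorial m : ℝ)) = 1 :=
      div_self (Nat.cast_ne_zero.mpr (Nat.factorial_ne_zero m))
    have hsum : (∑ i ∈ Finset.range m, (-1 : ℝ) ^ (m - (i + 1)) *
          ((Nat.factorial m : ℝ) / (Nat.factorial (i + 1) : ℝ)) *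
          (((i + 1 : ℕ) : ℝ) * x ^ (i + 1 - 1)))
        = ∑ i ∈ Finset.range m, -((-1 : ℝ) ^ (m - i) *
          ((Nat.factorial m : ℝ) / (Nat.factorial i : ℝ)) * x ^ i) := by
      refine Finset.sum_congr rfl fun i hi => ?_
      have := hterm i hi
      push_cast [Nat.add_sub_cancel]
      push_cast [Nat.add_sub_cancel] at this
      exact this
    rw [hsum, Finset.sum_neg_distrib]
    simp only [Nat.sub_self, pow_zero, hfac, one_mul, Nat.cast_zero, zero_mul, mul_zero,
      add_zero]
    ring
  set E : ℝ := Real.exp ((m + 1 : ℕ) * t) with hE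
  have hE0 : 0 < E := Real.exp_pos _
  set L : ℝ := 1 + E with hLdef
  have hL0 : (0 : ℝ) < L := by positivity
  have hM : (0 : ℝ) < ((m : ℝ) + 1) := by positivity
  have hG' : ∀ x : ℝ, HasDerivAt (fun y => F y * Real.exp y) (x ^ m * Real.exp x) x := by
    intro x
    have h := (hc x).fun_mul (Real.hasDerivAt_exp x)
    exact h.congr_deriv (by ring)
  set u : ℝ → ℝ := fun a => φ a (t + Real.log a) with hu
  have key : ∀ a : ℝ, 0 < a →
      (u a) ^ (m + 1) ≤ a ^ (m + 1) * L ∧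
      a ^ (m + 1) * (1 + E * Real.exp (-(u a))) ≤ (u a) ^ (m + 1) := by
    intro a ha
    set b : ℝ := u a with hb
    have hab : a < b := hφa a ha _
    have hb0 : 0 < b := lt_trans ha hab
    have hexp : Real.exp (((m + 1 : ℕ) : ℝ) * (t + Real.log a)) = E * a ^ (m + 1) := by
      rw [mul_add, Real.exp_add, Real.exp_nat_mul (Real.log a), Real.exp_log ha, hE]
    have heq : F b * Real.exp b - F a * Real.exp a = E * a ^ (m + 1) / ((m : ℝ) + 1) := by
      have h := hφeq a ha (t + Real.log a)
      rw [hexp] at h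
      push_cast at h ⊢
      linarith
    have hcont1 : Continuous fun x : ℝ => x ^ m * Real.exp x :=
      (continuous_pow m).mul Real.continuous_exp
    have hint : ∫ x in a..b, x ^ m * Real.exp x = E * a ^ (m + 1) / ((m : ℝ) + 1) := by
      rw [intervalIntegral.integral_eq_sub_of_hasDerivAt (fun x _ => hG' x)
        (hcont1.intervalIntegrable a b)]
      exact heq
    have hIpow : ∫ x in a..b, x ^ m = (b ^ (m + 1) - a ^ (m + 1)) / ((m : ℝ) + 1) := by
      simpa using integral_pow (a := a) (b := b) m
    have hmono1 : ∫ x in a..b, x ^ m ≤ ∫ x in a..b, x ^ m * Real.exp x := by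
      apply intervalIntegral.integral_mono_on hab.le
        ((continuous_pow m).intervalIntegrable a b) (hcont1.intervalIntegrable a b)
      intro x hx
      have hx0 : 0 ≤ x := le_trans ha.le hx.1
      have h1 : 1 ≤ Real.exp x := Real.one_le_exp (by linarith [hx.1])
      nlinarith [pow_nonneg hx0 m]
    have hmono2 : ∫ x in a..b, x ^ m * Real.exp x ≤ ∫ x in a..b, x ^ m * Real.exp b := by
      apply intervalIntegral.integral_mono_on hab.le (hcont1.intervalIntegrable a b)
        (((continuous_pow m).mul continuous_const).intervalIntegrable a b)
      intro x hx
      have hx0 : 0 ≤ x := le_trans ha.le hx.1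
      exact mul_le_mul_of_nonneg_left (Real.exp_le_exp.2 hx.2) (pow_nonneg hx0 m)
    have hI2 : ∫ x in a..b, x ^ m * Real.exp b
        = (b ^ (m + 1) - a ^ (m + 1)) / ((m : ℝ) + 1) * Real.exp b := by
      rw [intervalIntegral.integral_mul_const, hIpow]
    constructor
    · have h := hmono1
      rw [hIpow, hint] at h
      have h' : b ^ (m + 1) - a ^ (m + 1) ≤ E * a ^ (m + 1) :=
        (div_le_div_iff_of_pos_right hM).1 h
      rw [hLdef]
      nlinarith
    · have h := hmono2
      rw [hint, hI2] at h
      have h3 : E * a ^ (m + 1) ≤ (b ^ (m + 1) - a ^ (m + 1)) * Real.exp b := by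
        rw [div_mul_eq_mul_div] at h
        exact (div_le_div_iff_of_pos_right hM).1 h
      have h4 : E * a ^ (m + 1) * Real.exp (-b) ≤ b ^ (m + 1) - a ^ (m + 1) := by
        have h5 := mul_le_mul_of_nonneg_right h3 (Real.exp_nonneg (-b))
        rwa [mul_assoc (b ^ (m + 1) - a ^ (m + 1)), ← Real.exp_add, add_neg_cancel,
          Real.exp_zero, mul_one] at h5
      nlinarith
  have hmem : ∀ᶠ a in nhdsWithin (0 : ℝ) (Set.Ioi 0), a ∈ Set.Ioi (0 : ℝ) :=
    self_mem_nhdsWithin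
  set K : ℝ := L ^ ((1 : ℝ) / ((m + 1 : ℕ) : ℝ)) with hK
  have hKpow : K ^ (m + 1) = L := by
    rw [hK, ← Real.rpow_natCast (L ^ ((1 : ℝ) / ((m + 1 : ℕ) : ℝ))) (m + 1),
      ← Real.rpow_mul hL0.le]
    rw [show (1 : ℝ) / ((m + 1 : ℕ) : ℝ) * ((m + 1 : ℕ) : ℝ) = 1 by
      field_simp]
    exact Real.rpow_one L
  have hK0 : 0 < K := Real.rpow_pos_of_pos hL0 _
  -- u a → 0
  have huub : ∀ a : ℝ, 0 < a → u a ≤ a * K := by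
    intro a ha
    have h1 := (key a ha).1
    have h2 : (u a) ^ (m + 1) ≤ (a * K) ^ (m + 1) := by
      rw [mul_pow, hKpow]
      exact h1
    have hu0 : 0 < u a := lt_trans ha (hφa a ha _)
    exact le_of_pow_le_pow_left₀ (Nat.succ_ne_zero m) (by positivity) h2
  have hu0' : ∀ a : ℝ, 0 < a → 0 < u a := fun a ha => lt_trans ha (hφa a ha _)
  have hua : Tendsto u (nhdsWithin (0 : ℝ) (Set.Ioi 0)) (nhds 0) := by
    have hup : Tendsto (fun a : ℝ => a * K) (nhdsWithin (0 : ℝ) (Set.Ioi 0)) (nhds 0) := by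
      have h0 : Tendsto (fun a : ℝ => a * K) (nhds 0) (nhds (0 * K)) :=
        (continuous_id.mul continuous_const).tendsto 0
      rw [zero_mul] at h0
      exact h0.mono_left nhdsWithin_le_nhds
    refine tendsto_of_tendsto_of_tendsto_of_le_of_le' tendsto_const_nhds hup ?_ ?_
    · exact hmem.mono fun a ha => (hu0' a ha).le
    · exact hmem.mono fun a ha => huub a ha
  -- (u a / a)^(m+1) → L
  have hw : Tendsto (fun a => (u a / a) ^ (m + 1)) (nhdsWithin (0 : ℝ) (Set.Ioi 0)) (nhds L) := by
    have hlowt : Tendsto (fun a => 1 + E * Real.exp (-(u a)))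
        (nhdsWithin (0 : ℝ) (Set.Ioi 0)) (nhds L) := by
      have h1 : Tendsto (fun a => -(u a)) (nhdsWithin (0 : ℝ) (Set.Ioi 0)) (nhds 0) := by
        simpa using hua.neg
      have h2 : Tendsto (fun a => Real.exp (-(u a)))
          (nhdsWithin (0 : ℝ) (Set.Ioi 0)) (nhds 1) := by
        have h2' := (Real.continuous_exp.tendsto 0).comp h1
        rw [Real.exp_zero] at h2'
        exact h2'
      have h3 := (h2.const_mul E).const_add (1 : ℝ)
      simpa [hLdef] using h3
    refine tendsto_of_tendsto_of_tendsto_of_le_of_le' hlowt tendsto_const_nhds ?_ ?_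
    · refine hmem.mono fun a ha => ?_
      have h2 := (key a ha).2
      have hap : (0 : ℝ) < a ^ (m + 1) := pow_pos ha _
      rw [div_pow]
      rw [le_div_iff₀ hap]
      linarith
    · refine hmem.mono fun a ha => ?_
      have h1 := (key a ha).1
      have hap : (0 : ℝ) < a ^ (m + 1) := pow_pos ha _
      rw [div_pow, div_le_iff₀ hap]
      linarith
  -- conclude via continuity of rpow
  have hcont : ContinuousAt (fun x : ℝ => x ^ ((1 : ℝ) / ((m + 1 : ℕ) : ℝ))) L :=
    Real.continuousAt_rpow_const L _ (Or.inl hL0.ne')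
  have hfin := (hcont.tendsto).comp hw
  refine hfin.congr' ?_ |>.mono_left (le_refl _)
  refine hmem.mono fun a ha => ?_
  have hva : 0 ≤ u a / a := le_of_lt (div_pos (hu0' a ha) ha)
  show ((u a / a) ^ (m + 1)) ^ ((1 : ℝ) / ((m + 1 : ℕ) : ℝ)) = u a / a
  rw [one_div]
  exact Real.pow_rpow_inv_natCast hva (Nat.succ_ne_zero m)
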